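/- Let q > 1 be a real number, m ≥ 1 an integer, κ a real number, and s a complex number with Re(s) > κ. Then 1 + ∑_{a = m}^{∞} q^{-(s-κ)a} = (1 + (q^{-(s-κ)(m+1)} - q^{-2m(s-κ)})/(1 - q^{-(s-κ)})) / (1 - q^{-m(s-κ)}). -/

import Mathlib

/-- For a real `q > 1`, integer `m ≥ 1`, real `κ` and complex `s` with `Re(s) > κ`,
`1 + ∑_{a=m}^∞ q^{-(s-κ)a}` equals
`(1 + (q^{-(s-κ)(m+1)} - q^{-2m(s-κ)})/(1 - q^{-(s-κ)})) / (1 - q^{-m(s-κ)})`. -/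
theorem campana_local_factor_identity (q : ℝ) (hq : 1 < q) (m : ℕ) (hm : 1 ≤ m)
    (κ : ℝ) (s : ℂ) (hs : κ < s.re) :
    1 + ∑' n : ℕ, (q : ℂ) ^ (-(s - (κ : ℂ)) * ((m : ℂ) + (n : ℂ))) =
      (1 + ((q : ℂ) ^ (-(s - (κ : ℂ)) * ((m : ℂ) + 1)) -
          (q : ℂ) ^ (-(2 * (m : ℂ)) * (s - (κ : ℂ)))) /
        (1 - (q : ℂ) ^ (-(s - (κ : ℂ))))) /
      (1 - (q : ℂ) ^ (-(m : ℂ) * (s - (κ : ℂ)))) := by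
  have hq0 : (0:ℝ) < q := lt_trans one_pos hq
  have hq0' : (q : ℂ) ≠ 0 := by exact_mod_cast hq0.ne'
  set t : ℂ := -(s - (κ : ℂ)) with ht
  have htre : t.re < 0 := by
    simp [ht, Complex.sub_re]
    linarith
  set w : ℂ := (q : ℂ) ^ t with hw
  set A : ℂ := (q : ℂ) ^ (t * (m : ℂ)) with hA
  have hwn : ‖w‖ < 1 := by
    rw [hw, Complex.norm_cpow_eq_rpow_re_of_pos hq0]
    exact Real.rpow_lt_one_of_one_lt_of_neg hq htre
  have hAn : ‖A‖ < 1 := by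
    rw [hA, Complex.norm_cpow_eq_rpow_re_of_pos hq0]
    apply Real.rpow_lt_one_of_one_lt_of_neg hq
    have : (t * (m : ℂ)).re = t.re * m := by simp
    rw [this]
    have hm' : (1:ℝ) ≤ (m:ℝ) := by exact_mod_cast hm
    nlinarith
  have hw1 : (1 : ℂ) - w ≠ 0 := by
    intro h
    have : w = 1 := by linear_combination -h
    simp [this] at hwn
  have hA1 : (1 : ℂ) - A ≠ 0 := by
    intro h
    have : A = 1 := by linear_combination -h
    simp [this] at hAn
  have hsum : ∑' n : ℕ, (q : ℂ) ^ (t * ((m : ℂ) + (n : ℂ))) = A * (1 - w)⁻¹ := by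
    have h1 : ∀ n : ℕ, (q : ℂ) ^ (t * ((m : ℂ) + (n : ℂ))) = A * w ^ n := by
      intro n
      rw [mul_add, Complex.cpow_add _ _ hq0', hA, hw, mul_comm t (n:ℂ),
        Complex.cpow_nat_mul]
    simp_rw [h1]
    rw [tsum_mul_left, tsum_geometric_of_norm_lt_one hwn]
  have h2 : (q : ℂ) ^ (t * ((m : ℂ) + 1)) = A * w := by
    rw [mul_add, Complex.cpow_add _ _ hq0', mul_one]
  have h3 : (q : ℂ) ^ (-(2 * (m : ℂ)) * (s - (κ : ℂ))) = A * A := by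
    have : -(2 * (m : ℂ)) * (s - (κ : ℂ)) = t * (m : ℂ) + t * (m : ℂ) := by
      rw [ht]; ring
    rw [this, Complex.cpow_add _ _ hq0']
  have h4 : (q : ℂ) ^ (-(m : ℂ) * (s - (κ : ℂ))) = A := by
    have : -(m : ℂ) * (s - (κ : ℂ)) = t * (m : ℂ) := by rw [ht]; ring
    rw [this]
  rw [hsum, h2, h3, h4]
  field_simp
  ring
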